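/- Any subspace of the bipartite symmetric subspace of dimension at least N(N−1)/2 + 1 contains a product vector: if V is a complex linear subspace of the space of functions Fin N × Fin N → ℂ such that every w ∈ V satisfies w(i,j) = w(j,i) for all i,j, and dim V ≥ N(N−1)/2 + 1, then there exist nonzero vectors x, y ∈ ℂ^N with the vector (i,j) ↦ x(i)y(j) belonging to V. -/

import Mathlib

open MvPolynomial

lemma homogeneousComponent_mul_right {σ : Type*} {R : Type*} [CommRing R]
    (c f : MvPolynomial σ R) (e : ℕ) (hf : f.IsHomogeneous e) (d : ℕ) :
    homogeneousComponent (d+e) (c * f) = homogeneousComponent d c * f := by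
  conv_lhs => rw [← MvPolynomial.sum_homogeneousComponent c]
  rw [Finset.sum_mul, map_sum]
  rw [Finset.sum_congr rfl (fun i _ => ?_), Finset.sum_ite_eq' (Finset.range (c.totalDegree+1)) d
      (fun i => homogeneousComponent i c * f)]
  · by_cases hd : d ∈ Finset.range (c.totalDegree + 1)
    · rw [if_pos hd]
    · rw [if_neg hd, homogeneousComponent_eq_zero d c (by simpa using hd), zero_mul]
  · have h : (homogeneousComponent i c * f).IsHomogeneous (i+e) :=
      (homogeneousComponent_isHomogeneous i c).mul hf
    have hmem := (mem_homogeneousSubmodule _ _).mpr h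
    rcases eq_or_ne i d with rfl | hne
    · rw [if_pos rfl, homogeneousComponent_of_mem hmem, if_pos rfl]
    · rw [if_neg hne, homogeneousComponent_of_mem hmem, if_neg (by omega)]

lemma arith_key (m k c : ℕ) (hm : 1 ≤ m) (hk : k ≤ m) :
    (m * (c * m ^ (m-1)) + 1) ^ (k-1) * c < (c * m ^ (m-1) + 1) ^ m := by
  set v := c * m ^ (m-1) with hv
  set t := m * v with ht
  have h1 : t + 1 ≤ m * (v+1) := by
    have : m * (v+1) = m*v + m := by ring
    omega
  calc (t+1)^(k-1) * c ≤ (t+1)^(m-1) * c :=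
        Nat.mul_le_mul_right c (Nat.pow_le_pow_right (by omega) (by omega))
      _ ≤ (m*(v+1))^(m-1) * c :=
        Nat.mul_le_mul_right c (Nat.pow_le_pow_left h1 _)
      _ = c * m^(m-1) * (v+1)^(m-1) := by rw [mul_pow]; ring
      _ = v * (v+1)^(m-1) := by rw [hv]
      _ < (v+1) * (v+1)^(m-1) :=
        Nat.mul_lt_mul_of_lt_of_le (by omega) le_rfl (pow_pos (by omega) _)
      _ = (v+1)^m := by rw [← pow_succ']; congr 1; omega

lemma quadrics_common_zero {m k : ℕ} (hkm : k < m + 1)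
    (f : Fin k → MvPolynomial (Fin (m+1)) ℂ) (hf : ∀ i, (f i).IsHomogeneous 2) :
    ∃ x : Fin (m+1) → ℂ, x ≠ 0 ∧ ∀ i, eval x (f i) = 0 := by
  by_contra hcon
  push_neg at hcon
  have hzero : ∀ x : Fin (m+1) → ℂ, (∀ i, eval x (f i) = 0) → x = 0 := by
    intro x hx
    by_contra hxne
    obtain ⟨i, hi⟩ := hcon x hxne
    exact hi (hx i)
  rcases Nat.eq_zero_or_pos k with rfl | hk1
  · have := hzero (fun _ => 1) (fun i => i.elim0)
    exact one_ne_zero (congrFun this 0)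
  obtain ⟨l, rfl⟩ : ∃ l, k = l + 1 := ⟨k - 1, by omega⟩
  have hm1 : 1 ≤ m := by omega
  set I := Ideal.span (Set.range f) with hI
  have hXrad : ∀ j : Fin (m+1), ∃ s, (X j : MvPolynomial (Fin (m+1)) ℂ) ^ s ∈ I := by
    intro j
    have hX : (X j : MvPolynomial (Fin (m+1)) ℂ) ∈ I.radical := by
      rw [← vanishingIdeal_zeroLocus_eq_radical (K := ℂ), mem_vanishingIdeal_iff]
      intro x hx
      have hx0 : x = 0 := hzero x (fun i => (mem_zeroLocus_iff.mp hx) (f i)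
        (Ideal.subset_span (Set.mem_range_self i)))
      simp [hx0]
    exact hX
  choose sfun hsfun using hXrad
  set s := (Finset.univ.sup sfun) + 1 with hs
  have hXs : ∀ j : Fin (m+1), (X j : MvPolynomial (Fin (m+1)) ℂ) ^ s ∈ I := by
    intro j
    have hle : sfun j ≤ s := le_trans (Finset.le_sup (Finset.mem_univ j)) (by omega)
    have heq : (X j : MvPolynomial (Fin (m+1)) ℂ) ^ s
        = X j ^ (s - sfun j) * X j ^ sfun j := by
      rw [← pow_add]; congr 1; omega
    rw [heq]
    exact Ideal.mul_mem_left _ _ (hsfun j)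
  set d₀ := (m+1) * s + 1 with hd₀
  have hdegmem : ∀ {d : ℕ} {p : MvPolynomial (Fin (m+1)) ℂ}, p.IsHomogeneous d →
      ∀ {α}, α ∈ p.support → α.degree = d := by
    intro d p hp α hα
    rw [Finsupp.degree_eq_weight_one]
    exact hp (mem_support_iff.mp hα)
  have hmono : ∀ (α : Fin (m+1) →₀ ℕ) (co : ℂ), d₀ ≤ α.degree →
      (monomial α co : MvPolynomial (Fin (m+1)) ℂ) ∈ I := by
    intro α co hα
    have hex : ∃ j, s ≤ α j := by
      by_contra hno
      push_neg at hno
      have hdeg_eq : α.degree = ∑ j, α j :=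
        Finset.sum_subset (Finset.subset_univ _)
          (fun x _ hx => Finsupp.notMem_support_iff.mp hx)
      have h1 : ∑ j, α j ≤ ∑ _j : Fin (m+1), (s-1) :=
        Finset.sum_le_sum (fun j _ => by have := hno j; omega)
      rw [Finset.sum_const, Finset.card_univ, Fintype.card_fin, smul_eq_mul] at h1
      have h2 : (m+1) * (s-1) ≤ (m+1)*s := Nat.mul_le_mul_left _ (by omega)
      omega
    obtain ⟨j, hj⟩ := hex
    have hle : Finsupp.single j s ≤ α := Finsupp.single_le_iff.mpr hj
    have heq : (monomial α co : MvPolynomial (Fin (m+1)) ℂ)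
        = monomial (α - Finsupp.single j s) co * X j ^ s := by
      rw [X_pow_eq_monomial, monomial_mul, tsub_add_cancel_of_le hle, mul_one]
    rw [heq]
    exact Ideal.mul_mem_left _ _ (hXs j)
  have hhomI : ∀ (d : ℕ) (p : MvPolynomial (Fin (m+1)) ℂ), p.IsHomogeneous d → d₀ ≤ d →
      p ∈ I := by
    intro d p hp hd
    rw [← p.support_sum_monomial_coeff]
    exact Ideal.sum_mem _ (fun α hα => hmono α _ (by rw [hdegmem hp hα]; exact hd))
  have hext : ∀ (e : ℕ) (p : MvPolynomial (Fin (m+1)) ℂ), p.IsHomogeneous (e+2) → p ∈ I →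
      ∃ g : Fin (l+1) → MvPolynomial (Fin (m+1)) ℂ,
        (∀ i, (g i).IsHomogeneous e) ∧ p = ∑ i, g i * f i := by
    intro e p hp hpI
    rw [hI, Ideal.mem_span_range_iff_exists_fun] at hpI
    obtain ⟨cf, hc⟩ := hpI
    refine ⟨fun i => homogeneousComponent e (cf i),
      fun i => homogeneousComponent_isHomogeneous _ _, ?_⟩
    calc p = homogeneousComponent (e+2) p := by
            rw [homogeneousComponent_of_mem ((mem_homogeneousSubmodule _ _).mpr hp), if_pos rfl]
      _ = homogeneousComponent (e+2) (∑ i, cf i * f i) := by rw [hc]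
      _ = ∑ i, homogeneousComponent (e+2) (cf i * f i) := map_sum _ _ _
      _ = ∑ i, homogeneousComponent e (cf i) * f i :=
            Finset.sum_congr rfl fun i _ => homogeneousComponent_mul_right _ _ 2 (hf i) e
  set G : ((Fin (l+1) → ℕ) × (Fin (m+1) →₀ ℕ)) → MvPolynomial (Fin (m+1)) ℂ :=
    fun q => (∏ i, f i ^ q.1 i) * monomial q.2 1 with hG
  set SS : ℕ → Set ((Fin (l+1) → ℕ) × (Fin (m+1) →₀ ℕ)) :=
    fun t => {q | (∑ i, q.1 i) = t ∧ q.2.degree = d₀} with hSS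
  have hspan : ∀ t (p : MvPolynomial (Fin (m+1)) ℂ), p.IsHomogeneous (d₀ + 2*t) →
      p ∈ Submodule.span ℂ (G '' SS t) := by
    intro t
    induction t with
    | zero =>
      intro p hp
      rw [← p.support_sum_monomial_coeff]
      apply Submodule.sum_mem
      intro α hα
      have hdeg : α.degree = d₀ := by
        have := hdegmem hp hα; omega
      have hGa : G ((fun _ => 0), α) = monomial α 1 := by
        simp [hG]
      have heq : (monomial α (coeff α p) : MvPolynomial (Fin (m+1)) ℂ)
          = (coeff α p) • G ((fun _ => 0), α) := by
        rw [hGa, smul_monomial, smul_eq_mul, mul_one]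
      rw [heq]
      exact Submodule.smul_mem _ _ (Submodule.subset_span
        ⟨((fun _ => 0), α), ⟨by simp, hdeg⟩, rfl⟩)
    | succ t ih =>
      intro p hp
      have hp' : p.IsHomogeneous (d₀ + 2*t + 2) := by
        have h : d₀ + 2*(t+1) = d₀ + 2*t + 2 := by ring
        rwa [h] at hp
      obtain ⟨g, hg, rfl⟩ := hext (d₀ + 2*t) _ hp' (hhomI _ _ hp' (by omega))
      apply Submodule.sum_mem
      intro i _
      have hgi := ih (g i) (hg i)
      have hmap : g i * f i = (LinearMap.mulRight ℂ (f i)) (g i) := rfl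
      rw [hmap]
      have h1 : (LinearMap.mulRight ℂ (f i)) (g i)
          ∈ Submodule.map (LinearMap.mulRight ℂ (f i)) (Submodule.span ℂ (G '' SS t)) :=
        Submodule.mem_map_of_mem hgi
      rw [Submodule.map_span] at h1
      refine Submodule.span_mono ?_ h1
      rintro _ ⟨_, ⟨⟨a, β⟩, ⟨ha, hβ⟩, rfl⟩, rfl⟩
      refine ⟨(a + fun j => if j = i then 1 else 0, β), ⟨?_, hβ⟩, ?_⟩
      · simp only [Pi.add_apply, Finset.sum_add_distrib, ha]
        rw [Finset.sum_ite_eq' Finset.univ i (fun _ => 1)]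
        simp
      · simp only [hG, LinearMap.mulRight_apply, Pi.add_apply, pow_add]
        rw [Finset.prod_mul_distrib]
        have hprod : (∏ j, f j ^ (if j = i then 1 else 0)) = f i := by
          rw [Finset.prod_congr rfl (fun j _ => apply_ite (f j ^ ·) (j = i) 1 0)]
          simp [Finset.prod_ite_eq' Finset.univ i (fun j => f j ^ 1)]
        rw [hprod]
        ring
  set c := (d₀ + 1) ^ (m+1) with hc
  set v := c * m ^ (m-1) with hv
  set t := m * v with ht
  set D := d₀ + 2*t with hD
  set Gbig : ((Fin l → Fin (t+1)) × (Fin (m+1) → Fin (d₀+1))) → MvPolynomial (Fin (m+1)) ℂ :=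
    fun z => G (Fin.cons (t - ∑ i, (z.1 i : ℕ)) (fun i => (z.1 i : ℕ)),
                Finsupp.equivFunOnFinite.symm (fun j => (z.2 j : ℕ))) with hGbig
  have hsub : G '' SS t ⊆ Set.range Gbig := by
    rintro _ ⟨⟨a, β⟩, ⟨ha, hβ⟩, rfl⟩
    simp only at ha hβ
    refine ⟨(fun i => ⟨a i.succ, ?_⟩, fun j => ⟨β j, ?_⟩), ?_⟩
    · have h1 : a i.succ ≤ ∑ i', a i' :=
        Finset.single_le_sum (fun _ _ => Nat.zero_le _) (Finset.mem_univ _)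
      omega
    · have h1 : β j ≤ β.degree := Finsupp.le_degree _ _
      omega
    · simp only [hGbig]
      congr 1
      refine Prod.ext ?_ ?_
      · funext j
        refine Fin.cases ?_ ?_ j
        · have hsum : a 0 + ∑ i : Fin l, a i.succ = t := by
            rw [← ha, Fin.sum_univ_succ]
          simp only [Fin.cons_zero]
          omega
        · intro i; simp [Fin.cons_succ]
      · ext j
        simp
  have hfinW : FiniteDimensional ℂ (Submodule.span ℂ (Set.range Gbig)) :=
    FiniteDimensional.span_of_finite _ (Set.finite_range _)
  have hup : Module.finrank ℂ (Submodule.span ℂ (Set.range Gbig)) ≤ (t+1)^l * c := by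
    classical
    haveI : Fintype (Set.range Gbig) := Set.fintypeRange _
    refine le_trans (finrank_span_le_card _) ?_
    rw [Set.toFinset_range]
    refine le_trans (Finset.card_image_le) ?_
    rw [Finset.card_univ, Fintype.card_prod, Fintype.card_fun, Fintype.card_fun]
    simp [hc]
  set gfun : (Fin m → Fin (v+1)) → (Fin (m+1) →₀ ℕ) :=
    fun b => Finsupp.equivFunOnFinite.symm
      (Fin.snoc (fun i => (b i : ℕ)) (D - ∑ i, (b i : ℕ))) with hgfun
  have hbsum : ∀ b : Fin m → Fin (v+1), (∑ i, (b i : ℕ)) ≤ t := by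
    intro b
    calc ∑ i, (b i : ℕ) ≤ ∑ _i : Fin m, v :=
          Finset.sum_le_sum (fun i _ => by have := (b i).2; omega)
      _ = m * v := by rw [Finset.sum_const, Finset.card_univ, Fintype.card_fin, smul_eq_mul]
  have hginj : Function.Injective gfun := by
    intro b b' hbb
    have hco : ∀ i : Fin m, (b i : ℕ) = (b' i : ℕ) := by
      intro i
      have h := congrFun (congrArg (fun (F : Fin (m+1) →₀ ℕ) => (F : Fin (m+1) → ℕ)) hbb)
        (Fin.castSucc i)
      simpa [hgfun, Fin.snoc_castSucc] using h
    funext i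
    exact Fin.ext (hco i)
  have hgdeg : ∀ b, (gfun b).degree = D := by
    intro b
    have hdeq : (gfun b).degree = ∑ j, (gfun b) j :=
      Finset.sum_subset (Finset.subset_univ _)
        (fun x _ hx => Finsupp.notMem_support_iff.mp hx)
    rw [hdeq]
    have : ∀ j, (gfun b) j
        = (Fin.snoc (fun i => (b i : ℕ)) (D - ∑ i, (b i : ℕ)) : Fin (m+1) → ℕ) j := by
      intro j; simp [hgfun]
    rw [Finset.sum_congr rfl (fun j _ => this j), Fin.sum_univ_castSucc]
    simp only [Fin.snoc_castSucc, Fin.snoc_last]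
    have h1 := hbsum b
    have h2 : t ≤ D := by omega
    omega
  have hmem : ∀ b : Fin m → Fin (v+1),
      (monomial (gfun b) (1:ℂ)) ∈ Submodule.span ℂ (Set.range Gbig) := by
    intro b
    have hh : (monomial (gfun b) (1:ℂ)).IsHomogeneous (d₀ + 2*t) :=
      isHomogeneous_monomial _ (hgdeg b)
    exact Submodule.span_mono hsub (hspan t _ hh)
  have hli : LinearIndependent ℂ (fun b : Fin m → Fin (v+1) =>
      (⟨monomial (gfun b) 1, hmem b⟩ : Submodule.span ℂ (Set.range Gbig))) := by
    apply LinearIndependent.of_comp (Submodule.span ℂ (Set.range Gbig)).subtype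
    have hli0 := ((basisMonomials (Fin (m+1)) ℂ).linearIndependent).comp gfun hginj
    have hcoe : ((basisMonomials (Fin (m+1)) ℂ) ∘ gfun)
        = fun b => (monomial (gfun b) (1:ℂ)) := by
      funext b
      simp [Function.comp, coe_basisMonomials]
    rw [hcoe] at hli0
    exact hli0
  have hlow : (v+1)^m ≤ Module.finrank ℂ (Submodule.span ℂ (Set.range Gbig)) := by
    have h := hli.fintype_card_le_finrank
    rwa [Fintype.card_fun, Fintype.card_fin, Fintype.card_fin] at h
  have harith := arith_key m (l+1) c hm1 (by omega)
  have : (t+1)^l * c < (v+1)^m := by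
    simpa using harith
  omega


/-- Any subspace of the bipartite symmetric subspace of dimension at least
`N(N−1)/2 + 1` contains a (nonzero) product vector. -/
theorem stmt_11 {N : ℕ} (V : Submodule ℂ ((Fin N × Fin N) → ℂ))
    (hsym : ∀ w ∈ V, ∀ i j : Fin N, w (i, j) = w (j, i))
    (hdim : N * (N - 1) / 2 + 1 ≤ Module.finrank ℂ V) :
    ∃ (x y : Fin N → ℂ), x ≠ 0 ∧ y ≠ 0 ∧ (fun p : Fin N × Fin N => x p.1 * y p.2) ∈ V := by
  rcases Nat.eq_zero_or_pos N with rfl | hN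
  · exfalso
    have h0 : Module.finrank ℂ ((Fin 0 × Fin 0) → ℂ) = 0 := by
      simp [Module.finrank_pi]
    have := Submodule.finrank_le V
    omega
  obtain ⟨m, rfl⟩ : ∃ m, N = m + 1 := ⟨N-1, by omega⟩
  simp only [Nat.add_sub_cancel] at hdim
  -- the symmetric submodule
  set Sym : Submodule ℂ ((Fin (m+1) × Fin (m+1)) → ℂ) :=
    { carrier := {w | ∀ i j, w (i,j) = w (j,i)}
      add_mem' := fun ha hb i j => by simp only [Pi.add_apply, ha i j, hb i j]
      zero_mem' := fun i j => rfl
      smul_mem' := fun c w hw i j => by simp only [Pi.smul_apply, hw i j] } with hSym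
  have hVS : V ≤ Sym := fun w hw => fun i j => hsym w hw i j
  set V' : Submodule ℂ Sym := V.comap Sym.subtype with hV'
  have hfrV' : Module.finrank ℂ V' = Module.finrank ℂ V :=
    LinearEquiv.finrank_eq (Submodule.comapSubtypeEquivOfLe hVS)
  -- spanning family for Sym
  set e : Fin (m+1) × Fin (m+1) → ((Fin (m+1) × Fin (m+1)) → ℂ) :=
    fun q => Pi.single q 1 + Pi.single (q.2, q.1) 1 with he
  have hesym : ∀ q, e q ∈ Sym := by
    rintro ⟨q1, q2⟩ i j
    simp only [he, Pi.add_apply, Pi.single_apply, Prod.mk.injEq]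
    have e1 : (if i = q2 ∧ j = q1 then (1:ℂ) else 0) = (if j = q1 ∧ i = q2 then 1 else 0) :=
      if_congr and_comm rfl rfl
    have e2 : (if i = q1 ∧ j = q2 then (1:ℂ) else 0) = (if j = q2 ∧ i = q1 then 1 else 0) :=
      if_congr and_comm rfl rfl
    rw [e1, e2, add_comm]
  set g : Fin (m+1) × Fin (m+1) → Sym := fun q => ⟨e q, hesym q⟩ with hg
  have htop : (⊤ : Submodule ℂ Sym) ≤ Submodule.span ℂ (Set.range g) := by
    rintro ⟨w, hw⟩ -
    have hdecomp : (⟨w, hw⟩ : Sym) = ∑ q : Fin (m+1) × Fin (m+1), (w q / 2) • g q := by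
      apply Subtype.ext
      rw [Submodule.coe_sum]
      funext p
      rw [Finset.sum_apply]
      have hterm : ∀ q : Fin (m+1) × Fin (m+1),
          (((w q / 2) • g q : Sym) : (Fin (m+1) × Fin (m+1)) → ℂ) p
          = w q / 2 * (if p = q then 1 else 0) + w q / 2 * (if p = (q.2, q.1) then 1 else 0) := by
        intro q
        simp [hg, he, Pi.single_apply, mul_add]
      rw [Finset.sum_congr rfl (fun q _ => hterm q)]
      rw [Finset.sum_add_distrib]
      have h1 : ∑ q : Fin (m+1) × Fin (m+1), w q / 2 * (if p = q then 1 else 0) = w p / 2 := by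
        simp [Finset.sum_ite_eq]
      have h2 : ∑ q : Fin (m+1) × Fin (m+1), w q / 2 * (if p = (q.2, q.1) then 1 else 0)
          = w (p.2, p.1) / 2 := by
        have hcong : ∀ q : Fin (m+1) × Fin (m+1),
            w q / 2 * (if p = (q.2, q.1) then 1 else 0)
            = w q / 2 * (if q = (p.2, p.1) then 1 else 0) := by
          intro q
          congr 1
          refine if_congr ?_ rfl rfl
          constructor
          · intro h; rw [h]
          · intro h; rw [h]
        rw [Finset.sum_congr rfl (fun q _ => hcong q)]
        simp [Finset.sum_ite_eq']
      rw [h1, h2]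
      have hwp : w (p.2, p.1) = w p := by
        rcases p with ⟨p1, p2⟩
        exact (hw p1 p2).symm
      rw [hwp]
      ring
    rw [hdecomp]
    exact Submodule.sum_mem _ (fun q _ => Submodule.smul_mem _ _
      (Submodule.subset_span (Set.mem_range_self q)))
  classical
  have hrange : Set.range g ⊆ g '' {q : Fin (m+1) × Fin (m+1) | q.1 ≤ q.2} := by
    rintro _ ⟨⟨q1, q2⟩, rfl⟩
    rcases le_total q1 q2 with h | h
    · exact ⟨(q1,q2), h, rfl⟩
    · refine ⟨(q2,q1), h, ?_⟩
      apply Subtype.ext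
      show e (q2,q1) = e (q1,q2)
      simp only [he]
      exact add_comm _ _
  have hspan2 : Submodule.span ℂ (g '' {q : Fin (m+1) × Fin (m+1) | q.1 ≤ q.2}) = ⊤ :=
    eq_top_iff.mpr (le_trans htop (Submodule.span_mono hrange))
  have hfrSym : Module.finrank ℂ Sym ≤ (m+2) * (m+1) / 2 := by
    haveI : Fintype ({q : Fin (m+1) × Fin (m+1) | q.1 ≤ q.2} : Set _) :=
      Set.Finite.fintype (Set.toFinite _)
    haveI : Fintype ((g '' {q : Fin (m+1) × Fin (m+1) | q.1 ≤ q.2}) : Set _) :=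
      Set.Finite.fintype (Set.toFinite _)
    have h1 := finrank_span_le_card (R := ℂ) (g '' {q : Fin (m+1) × Fin (m+1) | q.1 ≤ q.2})
    rw [hspan2, finrank_top] at h1
    refine le_trans h1 ?_
    rw [Set.toFinset_image]
    refine le_trans Finset.card_image_le ?_
    rw [Set.toFinset_card]
    have hinj : Function.Injective
        (fun q : ({q : Fin (m+1) × Fin (m+1) | q.1 ≤ q.2} : Set _) => s(q.val.1, q.val.2)) := by
      rintro ⟨⟨a,b⟩, hab⟩ ⟨⟨c,d⟩, hcd⟩ h
      simp only [Sym2.eq_iff] at h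
      apply Subtype.ext
      simp only [Set.mem_setOf_eq] at hab hcd
      rcases h with ⟨h1, h2⟩ | ⟨h1, h2⟩
      · simp [h1, h2]
      · subst h1; subst h2
        have : b = a := le_antisymm hcd hab
        simp [this]
    have hcard := Fintype.card_le_of_injective _ hinj
    rw [Sym2.card] at hcard
    refine le_trans hcard ?_
    rw [Fintype.card_fin]
    rw [Nat.choose_two_right]
    simp
  have hq := Submodule.finrank_quotient_add_finrank V'
  set r := Module.finrank ℂ (↥Sym ⧸ V') with hrdef
  have hdiv : (m+2)*(m+1)/2 = (m+1)*m/2 + (m+1) := by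
    have h : (m+2)*(m+1) = (m+1)*m + (m+1)*2 := by ring
    rw [h, Nat.add_mul_div_right _ _ (by norm_num : 0 < 2)]
  have hrm : r < m + 1 := by omega
  set bQ := Module.finBasis ℂ (↥Sym ⧸ V') with hbQ
  set Smap0 : ((Fin (m+1) × Fin (m+1)) → ℂ) →ₗ[ℂ] ((Fin (m+1) × Fin (m+1)) → ℂ) :=
    (2⁻¹ : ℂ) • (LinearMap.id + LinearMap.funLeft ℂ ℂ Prod.swap) with hSmap0
  have hSmap0_apply : ∀ (w : (Fin (m+1) × Fin (m+1)) → ℂ) (p : Fin (m+1) × Fin (m+1)),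
      Smap0 w p = 2⁻¹ * (w p + w (p.2, p.1)) := by
    intro w p
    simp [hSmap0, LinearMap.funLeft_apply, Prod.swap]
    ring
  have hSmap0_mem : ∀ w, Smap0 w ∈ Sym := by
    intro w i j
    rw [hSmap0_apply, hSmap0_apply]
    ring
  set Smap : ((Fin (m+1) × Fin (m+1)) → ℂ) →ₗ[ℂ] Sym :=
    LinearMap.codRestrict Sym Smap0 hSmap0_mem with hSmap
  set φ : Fin r → (((Fin (m+1) × Fin (m+1)) → ℂ) →ₗ[ℂ] ℂ) :=
    fun jj => (bQ.coord jj) ∘ₗ (V'.mkQ ∘ₗ Smap) with hφ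
  set fpoly : Fin r → MvPolynomial (Fin (m+1)) ℂ :=
    fun jj => ∑ p : Fin (m+1) × Fin (m+1),
      MvPolynomial.C (φ jj (Pi.single p 1)) * (X p.1 * X p.2) with hfpoly
  have hfh : ∀ jj, (fpoly jj).IsHomogeneous 2 := by
    intro jj
    apply MvPolynomial.IsHomogeneous.sum
    intro p _
    have h2 : ((X p.1 * X p.2 : MvPolynomial (Fin (m+1)) ℂ)).IsHomogeneous 2 :=
      (isHomogeneous_X _ _).mul (isHomogeneous_X _ _)
    exact h2.C_mul _
  obtain ⟨x, hx0, hxf⟩ := quadrics_common_zero hrm fpoly hfh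
  refine ⟨x, x, hx0, hx0, ?_⟩
  set w : (Fin (m+1) × Fin (m+1)) → ℂ := fun p => x p.1 * x p.2 with hwdef
  have hwSym : w ∈ Sym := fun i j => mul_comm _ _
  have hweq : ∀ jj, φ jj w = 0 := by
    intro jj
    have hev : eval x (fpoly jj)
        = ∑ p : Fin (m+1) × Fin (m+1), φ jj (Pi.single p 1) * (x p.1 * x p.2) := by
      simp only [hfpoly, map_sum, map_mul, eval_C, eval_X]
    have hdecomp : w = ∑ p : Fin (m+1) × Fin (m+1), (x p.1 * x p.2) • (Pi.single p 1 : (Fin (m+1) × Fin (m+1)) → ℂ) := by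
      funext p'
      rw [Finset.sum_apply]
      simp only [Pi.smul_apply, Pi.single_apply, smul_eq_mul, mul_ite, mul_one, mul_zero]
      rw [Finset.sum_ite_eq Finset.univ p' (fun p => x p.1 * x p.2)]
      simp [hwdef]
    have hφw : φ jj w = ∑ p : Fin (m+1) × Fin (m+1), (x p.1 * x p.2) * φ jj (Pi.single p 1) := by
      conv_lhs => rw [hdecomp]
      rw [map_sum]
      exact Finset.sum_congr rfl (fun p _ => by rw [map_smul, smul_eq_mul])
    rw [hφw, ← hxf jj, hev]
    exact Finset.sum_congr rfl (fun p _ => mul_comm _ _)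
  have hcoord : ∀ jj, bQ.coord jj (V'.mkQ (Smap w)) = 0 := by
    intro jj
    have := hweq jj
    simpa only [hφ, LinearMap.comp_apply] using this
  have hq0 : V'.mkQ (Smap w) = 0 := (bQ.forall_coord_eq_zero_iff).mp hcoord
  rw [Submodule.mkQ_apply, Submodule.Quotient.mk_eq_zero] at hq0
  have hSw : Smap w = ⟨w, hwSym⟩ := by
    apply Subtype.ext
    rw [hSmap, LinearMap.codRestrict_apply]
    funext p
    rw [hSmap0_apply]
    have hswap : w (p.2,p.1) = w p := mul_comm _ _
    rw [hswap]
    ring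
  rw [hSw] at hq0
  exact hq0
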